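/- Let n be a friend of 10. Then n is a perfect square, n is divisible by 5, and n is coprime to 6. -/

import Mathlib

open ArithmeticFunction
open scoped ArithmeticFunction.sigma

/-- The abundancy index `σ(n)/n` as a rational number. -/
noncomputable def abundancy (n : ℕ) : ℚ := (σ 1 n : ℚ) / n

/-- `m` is a friend of `n` if they are distinct positive integers with the same
abundancy index. -/
def IsFriend (m n : ℕ) : Prop := 0 < m ∧ 0 < n ∧ m ≠ n ∧ abundancy m = abundancy n

/-- If `m ∣ n` then the abundancy of `m` is at most that of `n` (in cross-multiplied form). -/
lemma sigma_mul_le_of_dvd {m n : ℕ} (h : m ∣ n) (hn : n ≠ 0) : σ 1 m * n ≤ σ 1 n * m := by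
  have hm : m ≠ 0 := by rintro rfl; exact hn (Nat.eq_zero_of_zero_dvd h)
  have hσ : ∀ k : ℕ, σ 1 k = ∑ d ∈ k.divisors, k / d := by
    intro k; rw [sigma_one_apply]; exact (Nat.sum_div_divisors k _root_.id).symm
  calc σ 1 m * n = ∑ d ∈ m.divisors, (m / d) * n := by rw [hσ, Finset.sum_mul]
    _ = ∑ d ∈ m.divisors, (n / d) * m := by
        refine Finset.sum_congr rfl fun d hd => ?_
        have hdm : d ∣ m := (Nat.mem_divisors.mp hd).1
        have hdn : d ∣ n := hdm.trans h
        have hd0 : 0 < d := Nat.pos_of_ne_zero (by rintro rfl; exact hm (Nat.eq_zero_of_zero_dvd hdm))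
        obtain ⟨c, rfl⟩ := hdm
        obtain ⟨e, he⟩ := hdn
        rw [he, Nat.mul_div_cancel_left _ hd0, Nat.mul_div_cancel_left _ hd0]; ring
    _ ≤ ∑ d ∈ n.divisors, (n / d) * m :=
        Finset.sum_le_sum_of_subset (Nat.divisors_subset_of_dvd hn h)
    _ = σ 1 n * m := by rw [hσ, Finset.sum_mul]

/-- An odd number with odd sum of divisors is a perfect square. -/
lemma isSquare_of_odd_of_odd_sigma {n : ℕ} (hn0 : n ≠ 0) (hodd : ¬ 2 ∣ n)
    (hs : ¬ 2 ∣ σ 1 n) : IsSquare n := by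
  by_contra hsq
  have hexp : ∃ p, ¬ Even (n.factorization p) := by
    by_contra h
    push_neg at h
    exact hsq (by
      refine ⟨n.factorization.prod fun p k => p ^ (k / 2), ?_⟩
      conv_lhs => rw [← Nat.factorization_prod_pow_eq_self hn0]
      rw [← Finsupp.prod_mul]
      refine Finsupp.prod_congr fun p hp => ?_
      rw [← pow_add]
      congr 1
      obtain ⟨c, hc⟩ := h p
      omega)
  obtain ⟨p, hp⟩ := hexp
  have hpp : p.Prime := by
    by_contra hnp
    rw [Nat.factorization_eq_zero_of_not_prime n hnp] at hp
    exact hp Even.zero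
  set k := n.factorization p with hk
  have hkodd : Odd k := Nat.not_even_iff_odd.mp hp
  have hpdvd : p ∣ n := Nat.dvd_of_factorization_pos (by
    rw [← hk]; rintro h; rw [h] at hkodd; simp [Nat.odd_iff] at hkodd)
  have hpodd : Odd p := hpp.odd_of_ne_two (by rintro rfl; exact hodd hpdvd)
  have hco : Nat.Coprime (p ^ k) (ordCompl[p] n) :=
    Nat.Coprime.pow_left _ (Nat.coprime_ordCompl hpp hn0)
  have hmul : σ 1 n = σ 1 (p ^ k) * σ 1 (ordCompl[p] n) := by
    conv_lhs => rw [← Nat.ordProj_mul_ordCompl_eq_self n p]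
    exact isMultiplicative_sigma.map_mul_of_coprime hco
  have h2 : 2 ∣ σ 1 (p ^ k) := by
    rw [sigma_one_apply_prime_pow hpp, Nat.dvd_iff_mod_eq_zero, Finset.sum_nat_mod,
        Finset.sum_congr rfl fun i _ => Nat.odd_iff.mp (hpodd.pow)]
    simp only [Finset.sum_const, Finset.card_range, smul_eq_mul, mul_one]
    have := Nat.odd_iff.mp hkodd
    omega
  exact hs (hmul ▸ h2.mul_right _)

/-- A friend of 10 cannot be even. -/
lemma friend_ten_not_even (n : ℕ) (hn0 : 0 < n) (hne : n ≠ 10)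
    (key : 5 * σ 1 n = 9 * n) (h5 : 5 ∣ n) : ¬ 2 ∣ n := by
  intro h2
  have h10 : 10 ∣ n := Nat.Coprime.mul_dvd_of_dvd_of_dvd (by norm_num) h2 h5
  obtain ⟨k, rfl⟩ := h10
  have hk : 2 ≤ k := by
    rcases k with _ | _ | k
    · simp at hn0
    · simp at hne
    · omega
  have hsub : ({1, k, 2*k, 5*k, 10*k} : Finset ℕ) ⊆ (10 * k).divisors := by
    intro d hd
    simp only [Finset.mem_insert, Finset.mem_singleton] at hd
    rw [Nat.mem_divisors]
    refine ⟨?_, by positivity⟩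
    rcases hd with rfl | rfl | rfl | rfl | rfl
    · exact one_dvd _
    · exact ⟨10, by ring⟩
    · exact ⟨5, by ring⟩
    · exact ⟨2, by ring⟩
    · exact dvd_rfl
  have hsum : ∑ d ∈ ({1, k, 2*k, 5*k, 10*k} : Finset ℕ), d = 18 * k + 1 := by
    rw [Finset.sum_insert (by simp only [Finset.mem_insert, Finset.mem_singleton]; omega),
        Finset.sum_insert (by simp only [Finset.mem_insert, Finset.mem_singleton]; omega),
        Finset.sum_insert (by simp only [Finset.mem_insert, Finset.mem_singleton]; omega),
        Finset.sum_insert (by simp only [Finset.mem_singleton]; omega),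
        Finset.sum_singleton]
    ring
  have hle : 18 * k + 1 ≤ σ 1 (10 * k) := by
    rw [sigma_one_apply, ← hsum]
    exact Finset.sum_le_sum_of_subset hsub
  omega

/-- A friend of 10 cannot be divisible by 3. -/
lemma friend_ten_not_three_dvd (n : ℕ) (hn0 : n ≠ 0) (key : 5 * σ 1 n = 9 * n)
    (h5 : 5 ∣ n) (heven : ∀ p, Even (n.factorization p)) : ¬ 3 ∣ n := by
  intro h3
  have hp3 : Nat.Prime 3 := by norm_num
  have hp5 : Nat.Prime 5 := by norm_num
  have hp31 : Nat.Prime 31 := by norm_num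
  have hv3 : 2 ≤ n.factorization 3 := by
    have h1 := hp3.factorization_pos_of_dvd hn0 h3
    obtain ⟨c, hc⟩ := heven 3
    omega
  have h9 : 3 ^ 2 ∣ n := (Nat.Prime.pow_dvd_iff_le_factorization hp3 hn0).mpr hv3
  have hv5 : 2 ≤ n.factorization 5 := by
    have h1 := hp5.factorization_pos_of_dvd hn0 h5
    obtain ⟨c, hc⟩ := heven 5
    omega
  rcases eq_or_lt_of_le hv5 with hb | hb
  · -- the exponent of 5 in n is exactly 2, so 31 = σ(25) divides σ(n), hence 31² ∣ n
    have h31σ : 31 ∣ σ 1 n := by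
      have hord : ordProj[5] n = 5 ^ 2 := by rw [← hb]
      have hmul : σ 1 n = σ 1 (5 ^ 2) * σ 1 (ordCompl[5] n) := by
        conv_lhs => rw [← Nat.ordProj_mul_ordCompl_eq_self n 5]
        rw [isMultiplicative_sigma.map_mul_of_coprime
          (Nat.Coprime.pow_left _ (Nat.coprime_ordCompl hp5 hn0)), hord]
      rw [hmul, show σ 1 (5 ^ 2) = 31 from by
        rw [sigma_one_apply_prime_pow hp5]; decide]
      exact Dvd.intro _ rfl
    have h31n : 31 ∣ n := by
      have : 31 ∣ 9 * n := key ▸ h31σ.mul_left 5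
      exact Nat.Coprime.dvd_of_dvd_mul_left (by norm_num) this
    have hv31 : 2 ≤ n.factorization 31 := by
      have h1 := hp31.factorization_pos_of_dvd hn0 h31n
      obtain ⟨c, hc⟩ := heven 31
      omega
    have h961 : 31 ^ 2 ∣ n := (Nat.Prime.pow_dvd_iff_le_factorization hp31 hn0).mpr hv31
    have hM : 3 ^ 2 * (5 ^ 2 * 31 ^ 2) ∣ n :=
      Nat.Coprime.mul_dvd_of_dvd_of_dvd (by norm_num) h9
        (Nat.Coprime.mul_dvd_of_dvd_of_dvd (by norm_num)
          ((Nat.Prime.pow_dvd_iff_le_factorization hp5 hn0).mpr hb.le) h961)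
    have hσM : σ 1 (3 ^ 2 * (5 ^ 2 * 31 ^ 2)) = 400179 := by
      rw [isMultiplicative_sigma.map_mul_of_coprime (by norm_num),
          isMultiplicative_sigma.map_mul_of_coprime (by norm_num),
          sigma_one_apply_prime_pow hp3, sigma_one_apply_prime_pow hp5,
          sigma_one_apply_prime_pow hp31]
      decide
    have hle := sigma_mul_le_of_dvd hM hn0
    rw [hσM, show (3 ^ 2 * (5 ^ 2 * 31 ^ 2) : ℕ) = 216225 from by norm_num] at hle
    -- Now 400179 * n ≤ σ(n) * 216225 and 5 * σ(n) = 9 * n force n = 0.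
    clear * - key hle hn0
    omega
  · -- the exponent of 5 in n is at least 4
    have hv5' : 4 ≤ n.factorization 5 := by
      obtain ⟨c, hc⟩ := heven 5
      omega
    have h625 : 5 ^ 4 ∣ n := (Nat.Prime.pow_dvd_iff_le_factorization hp5 hn0).mpr hv5'
    have hM : 3 ^ 2 * 5 ^ 4 ∣ n := Nat.Coprime.mul_dvd_of_dvd_of_dvd (by norm_num) h9 h625
    have hσM : σ 1 (3 ^ 2 * 5 ^ 4) = 10153 := by
      rw [isMultiplicative_sigma.map_mul_of_coprime (by norm_num),
          sigma_one_apply_prime_pow hp3, sigma_one_apply_prime_pow hp5]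
      decide
    have hle := sigma_mul_le_of_dvd hM hn0
    rw [hσM, show (3 ^ 2 * 5 ^ 4 : ℕ) = 5625 from by norm_num] at hle
    clear * - key hle hn0
    omega

theorem friend_of_ten_square_five_dvd_coprime_six (n : ℕ) (hn : IsFriend n 10) :
    IsSquare n ∧ 5 ∣ n ∧ Nat.Coprime n 6 := by
  obtain ⟨hn0, -, hne, hab⟩ := hn
  have hσ10 : σ 1 10 = 18 := by rw [sigma_one_apply]; decide
  have key : 5 * σ 1 n = 9 * n := by
    unfold abundancy at hab
    rw [hσ10] at hab
    have hq : (n : ℚ) ≠ 0 := Nat.cast_ne_zero.mpr hn0.ne'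
    field_simp at hab
    have : ((5 * σ 1 n : ℕ) : ℚ) = ((9 * n : ℕ) : ℚ) := by push_cast at hab ⊢; linarith
    exact_mod_cast this
  have h5 : 5 ∣ n := Nat.Coprime.dvd_of_dvd_mul_left
    (by norm_num : Nat.Coprime 5 9) ⟨σ 1 n, key.symm⟩
  have h2 : ¬ 2 ∣ n := friend_ten_not_even n hn0 hne key h5
  have hσodd : ¬ 2 ∣ σ 1 n := by
    intro h
    exact h2 (Nat.Coprime.dvd_of_dvd_mul_left (by norm_num : Nat.Coprime 2 9)
      (key ▸ h.mul_left 5))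
  have hsq : IsSquare n := isSquare_of_odd_of_odd_sigma hn0.ne' h2 hσodd
  have heven : ∀ p, Even (n.factorization p) := by
    obtain ⟨r, hr⟩ := hsq
    intro p
    have hr0 : r ≠ 0 := by rintro rfl; simp [hr] at hn0
    rw [hr, Nat.factorization_mul hr0 hr0]
    exact ⟨r.factorization p, by simp [two_mul]⟩
  have h3 : ¬ 3 ∣ n := friend_ten_not_three_dvd n hn0.ne' key h5 heven
  refine ⟨hsq, h5, ?_⟩
  have c2 : Nat.Coprime n 2 := ((Nat.Prime.coprime_iff_not_dvd Nat.prime_two).mpr h2).symm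
  have c3 : Nat.Coprime n 3 :=
    ((Nat.Prime.coprime_iff_not_dvd (by norm_num : Nat.Prime 3)).mpr h3).symm
  exact (show (6:ℕ) = 2 * 3 by norm_num) ▸ Nat.Coprime.mul_right c2 c3
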